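/- Let S ⊆ ℕ contain a nonzero element and be closed under addition, let e = gcd S, let d ≥ 1 be an integer, and let h : ℕ → ℝ≥0 satisfy h(k + s) ≥ h(k) for every k ∈ ℕ and every s ∈ S. Then for every positive integer p, limsup_{k→∞} d!·h(p·e·k)/k^d = p^d · limsup_{k→∞} d!·h(e·k)/k^d, both limsups taken in [0, ∞]. -/

import Mathlib

open Filter
open scoped ENNReal NNReal Topology

private lemma mem_closure_cases {T : Set ℕ}
    (hadd : ∀ a ∈ T, ∀ b ∈ T, a + b ∈ T) :
    ∀ x ∈ AddSubmonoid.closure T, x = 0 ∨ x ∈ T := by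
  intro x hx
  induction hx using AddSubmonoid.closure_induction with
  | mem y hy => exact Or.inr hy
  | zero => exact Or.inl rfl
  | add a b ha hb iha ihb =>
    rcases iha with rfl | iha
    · simpa using ihb
    · rcases ihb with rfl | ihb
      · simpa using Or.inr iha
      · exact Or.inr (hadd _ iha _ ihb)

/-- A subsemigroup of ℕ whose elements have gcd 1 contains all large enough numbers. -/
private lemma nat_semigroup_cofinite (T : Set ℕ) (h0 : ∃ n ∈ T, n ≠ 0)
    (hadd : ∀ a ∈ T, ∀ b ∈ T, a + b ∈ T)
    (hgcd : ∀ c : ℕ, (∀ t ∈ T, c ∣ t) → c ∣ 1) :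
    ∃ N : ℕ, ∀ m, N ≤ m → m ∈ T := by
  have hM := mem_closure_cases hadd
  -- the subgroup of ℤ generated by T is cyclic, generated by ±1
  obtain ⟨g, hG⟩ := Int.subgroup_cyclic (AddSubgroup.closure ((↑) '' T : Set ℤ))
  have hgdvd : ∀ t ∈ T, g.natAbs ∣ t := by
    intro t ht
    have h1 : (t : ℤ) ∈ AddSubgroup.closure ((↑) '' T : Set ℤ) :=
      AddSubgroup.subset_closure ⟨t, ht, rfl⟩
    rw [hG, AddSubgroup.mem_closure_singleton] at h1
    obtain ⟨n, hn⟩ := h1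
    have : g ∣ (t : ℤ) := ⟨n, by rw [← hn, smul_eq_mul, mul_comm]⟩
    simpa using Int.natAbs_dvd_natAbs.2 this
  have hg1 : g.natAbs = 1 := Nat.dvd_one.1 (hgcd _ hgdvd)
  have h1mem : (1 : ℤ) ∈ AddSubgroup.closure ((↑) '' T : Set ℤ) := by
    rw [hG, AddSubgroup.mem_closure_singleton]
    rcases Int.natAbs_eq_iff.1 hg1 with h | h
    · exact ⟨1, by simp [h]⟩
    · exact ⟨-1, by simp [h]⟩
  -- every element of the ℤ-closure is a difference of two elements of the ℕ-closure
  have hP : ∀ x ∈ AddSubgroup.closure ((↑) '' T : Set ℤ),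
      ∃ a b : ℕ, a ∈ AddSubmonoid.closure T ∧ b ∈ AddSubmonoid.closure T ∧
        x = (a : ℤ) - b := by
    intro x hx
    induction hx using AddSubgroup.closure_induction with
    | mem y hy =>
      obtain ⟨t, ht, rfl⟩ := hy
      exact ⟨t, 0, AddSubmonoid.subset_closure ht, zero_mem _, by simp⟩
    | zero => exact ⟨0, 0, zero_mem _, zero_mem _, by simp⟩
    | add x y hx hy ihx ihy =>
      obtain ⟨a, b, ha, hb, hab⟩ := ihx
      obtain ⟨a', b', ha', hb', hab'⟩ := ihy
      exact ⟨a + a', b + b', add_mem ha ha', add_mem hb hb', by push_cast; omega⟩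
    | neg x hx ihx =>
      obtain ⟨a, b, ha, hb, hab⟩ := ihx
      exact ⟨b, a, hb, ha, by omega⟩
  obtain ⟨a, b, haM, hbM, hab'⟩ := hP 1 h1mem
  have hab : a = b + 1 := by omega
  by_cases hb0 : b = 0
  · -- then 1 ∈ T
    subst hb0
    have h1T : (1 : ℕ) ∈ T := by
      rcases hM a haM with rfl | hT
      · omega
      · simpa [hab] using hT
    refine ⟨1, fun m hm => ?_⟩
    have hmM : m ∈ AddSubmonoid.closure T := by
      have := nsmul_mem (AddSubmonoid.subset_closure h1T) m
      simpa [smul_eq_mul] using this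
    rcases hM m hmM with rfl | hT
    · omega
    · exact hT
  · have hb1 : 1 ≤ b := Nat.one_le_iff_ne_zero.2 hb0
    refine ⟨b * b, fun m hm => ?_⟩
    have hbpos : 0 < b := hb1
    set q := m / b with hq
    set r := m % b with hr
    have hrb : r < b := Nat.mod_lt _ hbpos
    have hbq : b ≤ q := (Nat.le_div_iff_mul_le hbpos).2 hm
    have hrq : r ≤ q := le_trans hrb.le hbq
    have hkey : m = (q - r) * b + r * a := by
      have h1 : b * q + r = m := Nat.div_add_mod m b
      have h2 : (q - r) * b + r * b = q * b := by
        rw [← add_mul, Nat.sub_add_cancel hrq]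
      calc m = b * q + r := h1.symm
        _ = (q - r) * b + r * b + r := by rw [h2]; ring
        _ = (q - r) * b + r * (b + 1) := by ring
        _ = (q - r) * b + r * a := by rw [hab]
    have hmM : m ∈ AddSubmonoid.closure T := by
      rw [hkey]
      exact add_mem
        (by simpa [smul_eq_mul] using nsmul_mem hbM (q - r))
        (by simpa [smul_eq_mul] using nsmul_mem haM r)
    rcases hM m hmM with rfl | hT
    · have : 1 ≤ b * b := Nat.one_le_iff_ne_zero.2 (by positivity)
      omega
    · exact hT

theorem volume_homogeneity_along_exponent_multiples (S : Set ℕ)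
    (hS0 : ∃ n ∈ S, n ≠ 0)
    (hSadd : ∀ a ∈ S, ∀ b ∈ S, a + b ∈ S)
    (e : ℕ)
    (he : (∀ s ∈ S, e ∣ s) ∧ ∀ c : ℕ, (∀ s ∈ S, c ∣ s) → c ∣ e)
    (d : ℕ) (hd : 1 ≤ d)
    (h : ℕ → ℝ≥0)
    (hmono : ∀ k : ℕ, ∀ s ∈ S, h k ≤ h (k + s))
    (p : ℕ) (hp : 0 < p) :
    limsup (fun k : ℕ =>
        (Nat.factorial d : ℝ≥0∞) * (h (p * e * k) : ℝ≥0∞) / (k : ℝ≥0∞) ^ d) atTop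
      = (p : ℝ≥0∞) ^ d *
        limsup (fun k : ℕ =>
          (Nat.factorial d : ℝ≥0∞) * (h (e * k) : ℝ≥0∞) / (k : ℝ≥0∞) ^ d) atTop := by
  obtain ⟨n, hnS, hn0⟩ := hS0
  have he0 : 0 < e := by
    rcases Nat.eq_zero_or_pos e with rfl | h
    · exact absurd (zero_dvd_iff.1 (he.1 n hnS)) hn0
    · exact h
  -- all large multiples of e lie in S
  obtain ⟨N, hN⟩ : ∃ N : ℕ, ∀ m, N ≤ m → e * m ∈ S := by
    refine nat_semigroup_cofinite {m | e * m ∈ S} ?_ ?_ ?_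
    · obtain ⟨m, rfl⟩ := he.1 n hnS
      exact ⟨m, hnS, by rintro rfl; simp at hn0⟩
    · intro a ha b hb
      show e * (a + b) ∈ S
      rw [mul_add]
      exact hSadd _ ha _ hb
    · intro c hc
      have hdvd : ∀ s ∈ S, c * e ∣ s := by
        intro s hs
        obtain ⟨m, rfl⟩ := he.1 s hs
        have hm : c ∣ m := hc m hs
        obtain ⟨u, rfl⟩ := hm
        exact ⟨u, by ring⟩
      have h2 : c * e ∣ 1 * e := by simpa using he.2 (c * e) hdvd
      exact (Nat.mul_dvd_mul_iff_right he0).1 h2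
  set F : ℕ → ℝ≥0∞ := fun k =>
    (Nat.factorial d : ℝ≥0∞) * (h (e * k) : ℝ≥0∞) / (k : ℝ≥0∞) ^ d with hF
  set G : ℕ → ℝ≥0∞ := fun k =>
    (Nat.factorial d : ℝ≥0∞) * (h (p * e * k) : ℝ≥0∞) / (k : ℝ≥0∞) ^ d with hG
  have hp0 : ((p : ℝ≥0∞)) ^ d ≠ 0 :=
    pow_ne_zero _ (by exact_mod_cast hp.ne')
  have hptop : ((p : ℝ≥0∞)) ^ d ≠ ⊤ := ENNReal.pow_ne_top (ENNReal.natCast_ne_top p)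
  -- pointwise identity: G k = p^d * F (p * k)
  have hcomp : ∀ k : ℕ, G k = (p : ℝ≥0∞) ^ d * F (p * k) := by
    intro k
    have harg : e * (p * k) = p * e * k := by ring
    simp only [hF, hG, harg, Nat.cast_mul]
    rw [mul_pow, ← mul_div_assoc,
      ENNReal.mul_div_mul_left _ _ hp0 hptop]
  have hφ : Tendsto (fun k : ℕ => p * k) atTop atTop :=
    tendsto_atTop_atTop.2 fun b => ⟨b, fun a ha =>
      le_trans ha (Nat.le_mul_of_pos_left a hp)⟩
  refine le_antisymm ?_ ?_
  · -- limsup G ≤ p^d * limsup F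
    calc limsup G atTop
        = limsup (fun k => (p : ℝ≥0∞) ^ d * F (p * k)) atTop :=
          limsup_congr (Eventually.of_forall hcomp)
      _ = (p : ℝ≥0∞) ^ d * limsup (fun k => F (p * k)) atTop :=
          ENNReal.limsup_const_mul_of_ne_top hptop
      _ ≤ (p : ℝ≥0∞) ^ d * limsup F atTop := by
          refine mul_le_mul_right ?_ _
          have : limsup (F ∘ fun k => p * k) atTop
              = limsup F (map (fun k => p * k) atTop) := limsup_comp F _ _
          rw [show (fun k => F (p * k)) = F ∘ (fun k => p * k) from rfl, this]
          exact limsup_le_limsup_of_le hφ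
  · -- p^d * limsup F ≤ limsup G
    rw [← ENNReal.limsup_const_mul_of_ne_top hptop]
    refine le_of_forall_gt_imp_ge_of_dense fun c hc => ?_
    by_cases hctop : c = ⊤
    · simp [hctop]
    have hev : ∀ᶠ k in atTop, G k < c := eventually_lt_of_limsup_lt hc
    set q : ℕ → ℕ := fun k => k / p + N + 1 with hqdef
    have hqtendsto : Tendsto q atTop atTop := by
      refine tendsto_atTop_atTop.2 fun b => ⟨p * b, fun a ha => ?_⟩
      have h1 : b ≤ a / p := (Nat.le_div_iff_mul_le hp).2 (by rwa [Nat.mul_comm] at ha)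
      simp only [hqdef]
      exact h1.trans ((Nat.le_add_right _ N).trans (Nat.le_succ _))
    have hev2 : ∀ᶠ k in atTop, G (q k) < c := hqtendsto.eventually hev
    set C : ℕ := p * N + p with hCdef
    have hdivpow : ∀ a b : ℝ≥0∞, (a / b) ^ d = a ^ d / b ^ d := fun a b => by
      rw [div_eq_mul_inv, mul_pow, ← ENNReal.inv_pow, ← div_eq_mul_inv]
    have hbound : ∀ᶠ k in atTop,
        (p : ℝ≥0∞) ^ d * F k ≤ c * ((1 : ℝ≥0∞) + C * (k : ℝ≥0∞)⁻¹) ^ d := by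
      filter_upwards [hev2, eventually_ge_atTop 1] with k hk hk1
      -- arithmetic facts
      have hexp : p * q k = p * (k / p) + (p * N + p) := by
        simp only [hqdef]; ring
      have hkq : k + N + 1 ≤ p * q k := by
        rw [hexp]
        have hdm := Nat.div_add_mod k p
        have hmod := Nat.mod_lt k hp
        have hNle : N ≤ p * N := Nat.le_mul_of_pos_left N hp
        generalize p * (k / p) = A at hdm ⊢
        generalize p * N = B at hNle ⊢
        omega
      have hle : p * q k ≤ k + C := by
        rw [hexp, hCdef]
        have h1 : p * (k / p) ≤ k := Nat.mul_div_le k p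
        omega
      have hkle : k ≤ p * q k := by omega
      have hS' : e * (p * q k - k) ∈ S := hN _ (le_tsub_of_add_le_left (by omega))
      have hmono' : h (e * k) ≤ h (p * e * q k) := by
        have h1 := hmono (e * k) _ hS'
        have h2 : e * k + e * (p * q k - k) = p * e * q k := by
          rw [← mul_add, Nat.add_sub_cancel' hkle]; ring
        rwa [h2] at h1
      -- ENNReal estimates
      have hq1 : 1 ≤ q k := by simp only [hqdef]; exact Nat.le_add_left 1 _
      have hQ0 : ((q k : ℝ≥0∞)) ^ d ≠ 0 :=
        pow_ne_zero _ (by exact_mod_cast (by omega : q k ≠ 0))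
      have hQtop : ((q k : ℝ≥0∞)) ^ d ≠ ⊤ :=
        ENNReal.pow_ne_top (ENNReal.natCast_ne_top _)
      have hBc : (Nat.factorial d : ℝ≥0∞) * (h (p * e * q k) : ℝ≥0∞)
          ≤ c * (q k : ℝ≥0∞) ^ d :=
        ((ENNReal.div_lt_iff (Or.inl hQ0) (Or.inl hQtop)).1 hk).le
      have hk0 : (k : ℝ≥0∞) ≠ 0 := by exact_mod_cast (by omega : k ≠ 0)
      have hktop : (k : ℝ≥0∞) ≠ ⊤ := ENNReal.natCast_ne_top k
      calc (p : ℝ≥0∞) ^ d * F k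
          = (p : ℝ≥0∞) ^ d * ((Nat.factorial d : ℝ≥0∞) * (h (e * k) : ℝ≥0∞))
              / (k : ℝ≥0∞) ^ d := by
            rw [hF, mul_div_assoc]
        _ ≤ (p : ℝ≥0∞) ^ d * ((Nat.factorial d : ℝ≥0∞) * (h (p * e * q k) : ℝ≥0∞))
              / (k : ℝ≥0∞) ^ d := by
            gcongr
        _ ≤ (p : ℝ≥0∞) ^ d * (c * (q k : ℝ≥0∞) ^ d) / (k : ℝ≥0∞) ^ d := by
            gcongr
        _ = c * ((p : ℝ≥0∞) * (q k : ℝ≥0∞)) ^ d / (k : ℝ≥0∞) ^ d := by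
            rw [mul_pow, mul_left_comm]
        _ ≤ c * (((k + C : ℕ) : ℝ≥0∞)) ^ d / (k : ℝ≥0∞) ^ d := by
            gcongr
            · rw [← Nat.cast_mul]
              exact_mod_cast hle
        _ = c * ((1 : ℝ≥0∞) + C * (k : ℝ≥0∞)⁻¹) ^ d := by
            rw [mul_div_assoc, ← hdivpow]
            congr 2
            push_cast
            rw [ENNReal.add_div, ENNReal.div_self hk0 hktop, div_eq_mul_inv]
    have hvlim : Tendsto (fun k : ℕ => c * ((1 : ℝ≥0∞) + C * (k : ℝ≥0∞)⁻¹) ^ d)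
        atTop (𝓝 c) := by
      have t1 : Tendsto (fun k : ℕ => (C : ℝ≥0∞) * (k : ℝ≥0∞)⁻¹) atTop (𝓝 0) := by
        simpa using ENNReal.Tendsto.const_mul (a := (C : ℝ≥0∞))
          ENNReal.tendsto_inv_nat_nhds_zero (Or.inr (ENNReal.natCast_ne_top C))
      have t2 : Tendsto (fun k : ℕ => (1 : ℝ≥0∞) + C * (k : ℝ≥0∞)⁻¹) atTop (𝓝 1) := by
        simpa using t1.const_add (1 : ℝ≥0∞)
      have t3 : Tendsto (fun k : ℕ => ((1 : ℝ≥0∞) + C * (k : ℝ≥0∞)⁻¹) ^ d) atTop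
          (𝓝 1) := by
        simpa [Function.comp_def] using ((ENNReal.continuous_pow d).tendsto (1 : ℝ≥0∞)).comp t2
      simpa using ENNReal.Tendsto.const_mul (a := c) t3 (Or.inr hctop)
    calc limsup (fun k => (p : ℝ≥0∞) ^ d * F k) atTop
        ≤ limsup (fun k : ℕ => c * ((1 : ℝ≥0∞) + C * (k : ℝ≥0∞)⁻¹) ^ d) atTop :=
          limsup_le_limsup hbound
      _ = c := hvlim.limsup_eq
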